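/- Let a ∈ ℂ with a ≠ 0. For every n ∈ ℕ₀ and every x ∈ ℂ, the Charlier polynomials satisfy the convolution identity ∑_{m=0}^n (−1)^m·(c_{n−m}^{(a)}(x)/(n−m)!)·(c_m^{(−a)}(−x)/m!) = δ_{n,0}; that is, the sum equals 1 when n = 0 and equals 0 for every n ≥ 1. -/

import Mathlib

open scoped BigOperators
open Polynomial

noncomputable section

/-- The scalar Charlier polynomial
`c_n^{(a)}(x) = ∑_{k=0}^n ((-n)_k (-x)_k / k!) (-1/a)^k`. -/
def charlier (a : ℂ) (n : ℕ) (x : ℂ) : ℂ :=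
  ∑ k ∈ Finset.range (n + 1),
    (ascPochhammer ℂ k).eval (-(n : ℂ)) * (ascPochhammer ℂ k).eval (-x)
      / (k.factorial : ℂ) * (-(1 / a)) ^ k


-- helper: smeval of descPochhammer ℤ over ℂ equals eval of descPochhammer ℂ
lemma smeval_desc (r : ℂ) (k : ℕ) :
    (descPochhammer ℤ k).smeval r = (descPochhammer ℂ k).eval r := by
  induction k with
  | zero => simp [descPochhammer_zero, Polynomial.smeval_one]
  | succ k ih =>
      rw [descPochhammer_succ_right, descPochhammer_succ_right,
        Polynomial.smeval_mul, ih, Polynomial.eval_mul, Polynomial.smeval_sub,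
        Polynomial.smeval_X, Polynomial.smeval_natCast, Polynomial.eval_sub,
        Polynomial.eval_X, Polynomial.eval_natCast]
      simp

-- Vandermonde for descPochhammer over ℂ, eval form, range version
lemma desc_vandermonde (r s : ℂ) (n : ℕ) :
    (descPochhammer ℂ n).eval (r + s) =
      ∑ k ∈ Finset.range (n + 1), (n.choose k : ℂ) *
        ((descPochhammer ℂ k).eval r * (descPochhammer ℂ (n - k)).eval s) := by
  have h := Ring.descPochhammer_smeval_add (R := ℂ) (r := r) (s := s) n (Commute.all r s)
  rw [Finset.Nat.sum_antidiagonal_eq_sum_range_succ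
    (fun i j => (n.choose i : ℂ) *
      ((descPochhammer ℤ i).smeval r * (descPochhammer ℤ j).smeval s)) n] at h
  simp only [smeval_desc] at h
  exact h

-- (-n)_k = (-1)^k * descFactorial n k
lemma asc_eval_neg_nat (n k : ℕ) :
    (ascPochhammer ℂ k).eval (-(n : ℂ)) = (-1) ^ k * (n.descFactorial k : ℂ) := by
  rw [ascPochhammer_eval_neg_eq_descPochhammer,
    descPochhammer_eval_eq_descFactorial]

def cu (a x : ℂ) (k : ℕ) : ℂ :=
  (ascPochhammer ℂ k).eval (-x) * (a⁻¹) ^ k / (k.factorial : ℂ)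

def cv (a x : ℂ) (j : ℕ) : ℂ :=
  (ascPochhammer ℂ j).eval x * (a⁻¹) ^ j / (j.factorial : ℂ)

lemma fact_ne (k : ℕ) : ((k.factorial : ℂ)) ≠ 0 := by
  exact_mod_cast Nat.cast_ne_zero.mpr k.factorial_ne_zero

lemma charlier_expand (a x : ℂ) (n : ℕ) :
    charlier a n x / (n.factorial : ℂ)
      = ∑ k ∈ Finset.range (n + 1), cu a x k / (((n - k).factorial : ℂ)) := by
  rw [charlier, Finset.sum_div]
  refine Finset.sum_congr rfl fun k hk => ?_
  have hkn : k ≤ n := Nat.lt_succ_iff.mp (Finset.mem_range.mp hk)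
  have hfac : (((n - k).factorial : ℂ)) * ((n.descFactorial k : ℂ)) = (n.factorial : ℂ) := by
    exact_mod_cast congrArg (Nat.cast (R := ℂ)) (Nat.factorial_mul_descFactorial hkn)
  have hD : ((n.descFactorial k : ℂ)) = (n.factorial : ℂ) / ((n - k).factorial : ℂ) := by
    rw [eq_div_iff (fact_ne _)]; linear_combination hfac
  have hna : (-(1/a)) ^ k = (-1) ^ k * (a⁻¹) ^ k := by
    rw [← neg_pow]; ring_nf
  rw [asc_eval_neg_nat, cu, hna, hD]
  field_simp [fact_ne]
  ring_nf
  have hsq : ((-1:ℂ))^(k*2) = 1 := by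
    rw [mul_comm, pow_mul, neg_one_sq, one_pow]
  rw [hsq, mul_one]
  field_simp [fact_ne]
  rw [div_eq_div_iff (mul_ne_zero (mul_ne_zero (fact_ne _) (fact_ne _)) (fact_ne _))
    (mul_ne_zero (fact_ne _) (fact_ne _))]
  ring

lemma charlier_expand_neg (a x : ℂ) (m : ℕ) :
    (-1 : ℂ) ^ m * (charlier (-a) m (-x) / (m.factorial : ℂ))
      = ∑ j ∈ Finset.range (m + 1),
          cv a x j * ((-1 : ℂ) ^ (m - j) / (((m - j).factorial : ℂ))) := by
  rw [charlier, Finset.sum_div, Finset.mul_sum]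
  refine Finset.sum_congr rfl fun j hj => ?_
  have hjm : j ≤ m := Nat.lt_succ_iff.mp (Finset.mem_range.mp hj)
  have hfac : (((m - j).factorial : ℂ)) * ((m.descFactorial j : ℂ)) = (m.factorial : ℂ) := by
    exact_mod_cast congrArg (Nat.cast (R := ℂ)) (Nat.factorial_mul_descFactorial hjm)
  have hD : ((m.descFactorial j : ℂ)) = (m.factorial : ℂ) / ((m - j).factorial : ℂ) := by
    rw [eq_div_iff (fact_ne _)]; linear_combination hfac
  have hinv : (-(1 / (-a))) = a⁻¹ := by
    rw [one_div, inv_neg, neg_neg]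
  have hsign : ((-1 : ℂ)) ^ (m - j) * (-1) ^ j = (-1) ^ m := by
    rw [← pow_add, Nat.sub_add_cancel hjm]
  rw [neg_neg, asc_eval_neg_nat, cv, hD, hinv, ← hsign]
  have hsq : ((-1:ℂ))^(j*2) = 1 := by
    rw [mul_comm, pow_mul, neg_one_sq, one_pow]
  field_simp [fact_ne]
  ring_nf
  rw [hsq, mul_one]
  field_simp [fact_ne]
  rw [div_eq_div_iff (mul_ne_zero (mul_ne_zero (fact_ne _) (fact_ne _)) (fact_ne _))
    (mul_ne_zero (fact_ne _) (fact_ne _))]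
  ring

lemma cu_cv_conv (a x : ℂ) (n : ℕ) :
    ∑ k ∈ Finset.range (n + 1), cu a x k * cv a x (n - k)
      = if n = 0 then (1 : ℂ) else 0 := by
  have key : (if n = 0 then (1 : ℂ) else 0)
      = ∑ k ∈ Finset.range (n + 1), (n.choose k : ℂ) *
          ((descPochhammer ℂ k).eval x * (descPochhammer ℂ (n - k)).eval (-x)) := by
    rw [← desc_vandermonde x (-x) n, add_neg_cancel, descPochhammer_eval_zero]
  have hterm : ∀ k ∈ Finset.range (n + 1),
      cu a x k * cv a x (n - k)
        = ((-1 : ℂ) ^ n * (a⁻¹) ^ n / (n.factorial : ℂ)) *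
          ((n.choose k : ℂ) *
            ((descPochhammer ℂ k).eval x * (descPochhammer ℂ (n - k)).eval (-x))) := by
    intro k hk
    have hkn : k ≤ n := Nat.lt_succ_iff.mp (Finset.mem_range.mp hk)
    have hch : (n.choose k : ℂ) * (k.factorial : ℂ) * (((n - k).factorial : ℂ))
        = (n.factorial : ℂ) := by
      exact_mod_cast congrArg (Nat.cast (R := ℂ)) (Nat.choose_mul_factorial_mul_factorial hkn)
    have hx : (ascPochhammer ℂ (n - k)).eval x
        = (-1 : ℂ) ^ (n - k) * (descPochhammer ℂ (n - k)).eval (-x) := by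
      have h := ascPochhammer_eval_neg_eq_descPochhammer ℂ (-x) (n - k)
      rwa [neg_neg] at h
    have hsign : ((-1 : ℂ)) ^ k * (-1) ^ (n - k) = (-1) ^ n := by
      rw [← pow_add, Nat.add_sub_cancel' hkn]
    have hpow : (a⁻¹ : ℂ) ^ k * (a⁻¹) ^ (n - k) = (a⁻¹) ^ n := by
      rw [← pow_add, Nat.add_sub_cancel' hkn]
    rw [cu, cv, ascPochhammer_eval_neg_eq_descPochhammer, hx,
      div_mul_div_comm, div_mul_eq_mul_div, div_eq_div_iff
        (mul_ne_zero (fact_ne k) (fact_ne (n - k))) (fact_ne n)]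
    linear_combination
      ((descPochhammer ℂ k).eval x * (descPochhammer ℂ (n - k)).eval (-x)
        * (n.factorial : ℂ) * (a⁻¹) ^ k * (a⁻¹) ^ (n - k)) * hsign
      + ((descPochhammer ℂ k).eval x * (descPochhammer ℂ (n - k)).eval (-x)
        * (n.factorial : ℂ) * (-1 : ℂ) ^ n) * hpow
      - ((descPochhammer ℂ k).eval x * (descPochhammer ℂ (n - k)).eval (-x)
        * (-1 : ℂ) ^ n * (a⁻¹) ^ n) * hch
  rw [Finset.sum_congr rfl hterm, ← Finset.mul_sum, ← key]
  rcases eq_or_ne n 0 with rfl | hn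
  · simp
  · simp [hn]

lemma algQ (k : ℕ) :
    (algebraMap ℚ ℂ) (1 / (k.factorial : ℚ)) = 1 / (k.factorial : ℂ) := by
  rw [eq_ratCast (algebraMap ℚ ℂ)]
  push_cast
  ring

lemma coeff_UE (a x : ℂ) (N : ℕ) :
    (PowerSeries.coeff N) (PowerSeries.mk (cu a x) * PowerSeries.exp ℂ)
      = charlier a N x / (N.factorial : ℂ) := by
  rw [PowerSeries.coeff_mul, charlier_expand,
    Finset.Nat.sum_antidiagonal_eq_sum_range_succ
      (fun i j => (PowerSeries.coeff i) (PowerSeries.mk (cu a x))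
        * (PowerSeries.coeff j) (PowerSeries.exp ℂ)) N]
  refine Finset.sum_congr rfl fun k hk => ?_
  rw [PowerSeries.coeff_mk, PowerSeries.coeff_exp, algQ, mul_one_div]

lemma coeff_VE (a x : ℂ) (N : ℕ) :
    (PowerSeries.coeff N)
        (PowerSeries.mk (cv a x) * PowerSeries.evalNegHom (PowerSeries.exp ℂ))
      = (-1 : ℂ) ^ N * (charlier (-a) N (-x) / (N.factorial : ℂ)) := by
  rw [PowerSeries.coeff_mul, charlier_expand_neg,
    Finset.Nat.sum_antidiagonal_eq_sum_range_succ
      (fun i j => (PowerSeries.coeff i) (PowerSeries.mk (cv a x))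
        * (PowerSeries.coeff j) (PowerSeries.evalNegHom (PowerSeries.exp ℂ))) N]
  refine Finset.sum_congr rfl fun k hk => ?_
  rw [PowerSeries.coeff_mk]
  congr 1
  simp only [PowerSeries.evalNegHom, PowerSeries.coeff_rescale, PowerSeries.coeff_exp, algQ]
  rw [mul_one_div]

lemma coeff_UV (a x : ℂ) (N : ℕ) :
    (PowerSeries.coeff N) (PowerSeries.mk (cu a x) * PowerSeries.mk (cv a x))
      = if N = 0 then (1 : ℂ) else 0 := by
  rw [PowerSeries.coeff_mul,
    Finset.Nat.sum_antidiagonal_eq_sum_range_succ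
      (fun i j => (PowerSeries.coeff i) (PowerSeries.mk (cu a x))
        * (PowerSeries.coeff j) (PowerSeries.mk (cv a x))) N,
    ← cu_cv_conv a x N]
  refine Finset.sum_congr rfl fun k hk => ?_
  rw [PowerSeries.coeff_mk, PowerSeries.coeff_mk]


/-- the convolution identity for Charlier polynomials:
`∑_{m=0}^n (-1)^m (c_{n-m}^{(a)}(x)/(n-m)!)(c_m^{(-a)}(-x)/m!) = δ_{n,0}`. -/
theorem charlier_convolution (a : ℂ) (ha : a ≠ 0) (n : ℕ) (x : ℂ) :
    ∑ m ∈ Finset.range (n + 1),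
      (-1 : ℂ) ^ m * (charlier a (n - m) x / ((n - m).factorial : ℂ))
        * (charlier (-a) m (-x) / (m.factorial : ℂ))
      = if n = 0 then 1 else 0 := by
  have hE : (PowerSeries.exp ℂ) * PowerSeries.evalNegHom (PowerSeries.exp ℂ) = 1 :=
    PowerSeries.exp_mul_exp_neg_eq_one
  have hprod : (PowerSeries.mk (cu a x) * PowerSeries.exp ℂ)
      * (PowerSeries.mk (cv a x) * PowerSeries.evalNegHom (PowerSeries.exp ℂ))
      = PowerSeries.mk (cu a x) * PowerSeries.mk (cv a x) := by
    rw [mul_mul_mul_comm, hE, mul_one]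
  have hcoeff := congrArg (PowerSeries.coeff n) hprod
  rw [coeff_UV, PowerSeries.coeff_mul,
    Finset.Nat.sum_antidiagonal_eq_sum_range_succ
      (fun i j => (PowerSeries.coeff i) (PowerSeries.mk (cu a x) * PowerSeries.exp ℂ)
        * (PowerSeries.coeff j)
            (PowerSeries.mk (cv a x) * PowerSeries.evalNegHom (PowerSeries.exp ℂ))) n] at hcoeff
  simp only [coeff_UE, coeff_VE] at hcoeff
  rw [← hcoeff, ← Finset.sum_range_reflect]
  refine Finset.sum_congr rfl fun m hm => ?_
  have hmn : m ≤ n := Nat.lt_succ_iff.mp (Finset.mem_range.mp hm)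
  have h1 : n + 1 - 1 - m = n - m := by omega
  have h2 : n - (n - m) = m := by omega
  rw [h1, h2]
  ring
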